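/- MacMahon's first rule: for a positive integer s, the formal power series identity Ω_≥ (1/((1 - λx)(1 - y/λ^s))) = 1/((1 - x)(1 - x^s y)) holds; concretely, the sum over all pairs (a,b) of non-negative integers with a - s·b ≥ 0 of x^a y^b equals the power series expansion of 1/((1 - x)(1 - x^s y)). -/

import Mathlib

/-- The generating function of all pairs `(a,b)` of non-negative integers with
`a - s·b ≥ 0`, as a formal power series in two variables. -/
def macmahon1Series (s : ℕ) : MvPowerSeries (Fin 2) ℚ :=
  fun d => if s * d 1 ≤ d 0 then 1 else 0

open MvPowerSeries Finsupp in
lemma macmahon_step1 (s : ℕ) :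
    macmahon1Series s * (1 - MvPowerSeries.X 0) =
      (fun d => if d 0 = s * d 1 then 1 else 0 : MvPowerSeries (Fin 2) ℚ) := by
  have cf : ∀ e : Fin 2 →₀ ℕ, coeff (R := ℚ) e (macmahon1Series s)
      = if s * e 1 ≤ e 0 then 1 else 0 := fun e => rfl
  ext d
  show coeff (R := ℚ) d (macmahon1Series s * (1 - MvPowerSeries.X 0))
    = if d 0 = s * d 1 then 1 else 0
  rw [mul_sub, mul_one, map_sub, X, coeff_mul_monomial, cf d]
  by_cases h1 : Finsupp.single (0 : Fin 2) 1 ≤ d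
  · rw [if_pos h1, mul_one, cf]
    have h0 : 1 ≤ d 0 := by simpa using Finsupp.le_def.mp h1 0
    have e0 : ((d - Finsupp.single (0:Fin 2) 1 : Fin 2 →₀ ℕ)) 0 = d 0 - 1 := by
      simp [Finsupp.tsub_apply]
    have e1 : ((d - Finsupp.single (0:Fin 2) 1 : Fin 2 →₀ ℕ)) 1 = d 1 := by
      simp [Finsupp.tsub_apply]
    rw [e0, e1]
    rcases lt_trichotomy (d 0) (s * d 1) with h | h | h
    · rw [if_neg (by omega), if_neg (by omega), if_neg (by omega), sub_zero]
    · rw [if_pos h.ge, if_neg (by omega), if_pos h, sub_zero]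
    · rw [if_pos h.le, if_pos (by omega), if_neg (by omega), sub_self]
  · rw [if_neg h1, sub_zero]
    have h0 : d 0 = 0 := by
      by_contra h0
      exact h1 (Finsupp.le_def.mpr (by
        intro i
        fin_cases i <;> simp <;> omega))
    rcases Nat.eq_zero_or_pos (d 1) with h2 | h2
    · have hz : s * d 1 = 0 := by rw [h2, Nat.mul_zero]
      rw [if_pos (by omega), if_pos (by omega)]
    · by_cases hs0 : s = 0
      · have hz : s * d 1 = 0 := by rw [hs0, Nat.zero_mul]
        rw [if_pos (by omega), if_pos (by omega)]
      · have hss : s ≤ s * d 1 := Nat.le_mul_of_pos_right s h2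
        rw [if_neg (by omega), if_neg (by omega)]

set_option linter.unusedVariables false in
open MvPowerSeries Finsupp in
/-- MacMahon's first rule: `Ω_≥ 1/((1-λx)(1-y/λ^s)) = 1/((1-x)(1-x^s y))`, i.e.
`Σ_{a ≥ s b} x^a y^b = 1/((1-x)(1-x^s y))` as formal power series. -/
theorem macmahon_first_rule (s : ℕ) (hs : 0 < s) :
    macmahon1Series s *
      ((1 - MvPowerSeries.X 0) * (1 - (MvPowerSeries.X 0) ^ s * MvPowerSeries.X 1)) = 1 := by
  rw [← mul_assoc, show macmahon1Series s * (1 - MvPowerSeries.X 0) = _ from macmahon_step1 s]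
  have hX : (MvPowerSeries.X 0 : MvPowerSeries (Fin 2) ℚ) ^ s * MvPowerSeries.X 1
      = monomial (R := ℚ) (Finsupp.single 0 s + Finsupp.single 1 1) 1 := by
    rw [X_pow_eq, X, monomial_mul_monomial, mul_one]
  set g : MvPowerSeries (Fin 2) ℚ := (fun d => if d 0 = s * d 1 then 1 else 0) with hg
  have cg : ∀ e : Fin 2 →₀ ℕ, coeff (R := ℚ) e g = if e 0 = s * e 1 then 1 else 0 := fun e => rfl
  ext d
  show coeff (R := ℚ) d _ = coeff (R := ℚ) d 1
  rw [mul_sub, mul_one, map_sub, hX, coeff_mul_monomial, cg d]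
  set n : Fin 2 →₀ ℕ := Finsupp.single 0 s + Finsupp.single 1 1 with hn
  have n0 : n 0 = s := by simp [hn]
  have n1 : n 1 = 1 := by simp [hn]
  rw [coeff_one]
  by_cases h1 : n ≤ d
  · rw [if_pos h1, mul_one, cg]
    have hd0 : s ≤ d 0 := by have := Finsupp.le_def.mp h1 0; omega
    have hd1 : 1 ≤ d 1 := by have := Finsupp.le_def.mp h1 1; omega
    have e0 : (d - n) 0 = d 0 - s := by simp [Finsupp.tsub_apply, n0]
    have e1 : (d - n) 1 = d 1 - 1 := by simp [Finsupp.tsub_apply, n1]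
    rw [e0, e1]
    have key : s * (d 1 - 1) + s = s * d 1 := by
      obtain ⟨k, hk⟩ := Nat.exists_eq_add_of_le hd1
      rw [hk, Nat.add_sub_cancel_left, Nat.mul_add, Nat.mul_one]
      omega
    have hdne : d ≠ 0 := by
      intro h; rw [h] at hd1; simp at hd1
    rw [if_neg hdne]
    by_cases h : d 0 = s * d 1
    · rw [if_pos h, if_pos (by omega), sub_self]
    · rw [if_neg h, if_neg (by omega), sub_zero]
  · rw [if_neg h1, sub_zero]
    by_cases hd : d = 0
    · rw [if_pos hd, if_pos (by simp [hd])]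
    · rw [if_neg hd]
      by_cases h : d 0 = s * d 1
      · exfalso
        have hd1 : 1 ≤ d 1 := by
          rcases Nat.eq_zero_or_pos (d 1) with h2 | h2
          · exfalso
            have hz : s * d 1 = 0 := by rw [h2, Nat.mul_zero]
            apply hd
            ext i
            fin_cases i
            · show d 0 = 0; omega
            · show d 1 = 0; omega
          · omega
        have hss : s ≤ s * d 1 := Nat.le_mul_of_pos_right s hd1
        refine h1 (Finsupp.le_def.mpr fun i => ?_)
        fin_cases i
        · show n 0 ≤ d 0; omega
        · show n 1 ≤ d 1; omega
      · rw [if_neg h]
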